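/- If a holomorphic triple (E₁, E₂, φ) of type with ranks r₁, r₂ ≥ 1 is q-stable, where q(m) is a polynomial with positive leading coefficient whose leading coefficient is sufficiently large (specifically, r_K·q(m) ≥ r_K·P_{E₁}(m) − r₁·P_K(m) for all m ≫ 0 where K = ker φ), then the morphism φ : E₁ → E₂ is injective. -/

import Mathlib

/-- For a holomorphic triple `(E₁, E₂, φ)` with ranks `r₁, r₂ ≥ 1`
(modelled as modules, with abstract rank and Hilbert-polynomial functions on
subsheaves of `E₁`, valued in a linearly ordered field with the eventual ordering),
if the triple is `q`-stable — so that in particular, if `K = ker φ` is nonzero, the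
subtriple `K → 0` destabilizes, i.e. `r₂(r₁ P_K − rk K · P_{E₁} + rk K · q) < 0` —
and `q` is sufficiently large, namely `rk K · P_{E₁} − r₁ · P_K ≤ rk K · q`,
then `φ` is injective. -/
theorem stmt0 {R F : Type*} [CommRing R] [Field F] [LinearOrder F] [IsStrictOrderedRing F]
    {E₁ E₂ : Type*} [AddCommGroup E₁] [Module R E₁] [AddCommGroup E₂] [Module R E₂]
    (φ : E₁ →ₗ[R] E₂)
    (r₁ r₂ P₁ q : F)
    (rk P : Submodule R E₁ → F)
    (hr₁ : 0 < r₁) (hr₂ : 0 < r₂)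
    (hrkpos : ∀ N : Submodule R E₁, N ≠ ⊥ → 0 < rk N)
    (hstab : LinearMap.ker φ ≠ ⊥ →
      r₂ * (r₁ * P (LinearMap.ker φ) - rk (LinearMap.ker φ) * P₁
        + rk (LinearMap.ker φ) * q) < 0)
    (hbig : rk (LinearMap.ker φ) * P₁ - r₁ * P (LinearMap.ker φ)
        ≤ rk (LinearMap.ker φ) * q) :
    Function.Injective φ := by
  rw [← LinearMap.ker_eq_bot]
  by_contra hk
  have h1 := hstab hk
  nlinarith [hstab hk, hbig, hr₂]
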